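/- Let R be a commutative ring and a ∈ R. In the formal power series ring R[[x, y]], the contraction to R of the ideal generated by x and x·y − a equals the principal ideal generated by a; equivalently, the kernel of the composite ring homomorphism R → R[[x, y]] → R[[x, y]]/(x, x·y − a) is exactly (a). -/

import Mathlib

/-- **Case 2 of lem:ES_implies_1aligned.**
Let `R` be a commutative ring and `a ∈ R`.  The contraction to `R` of the ideal
`(x, x·y − a)` of `R[[x, y]]` is exactly the principal ideal `(a)`. -/
theorem comap_span_X_XY_sub_C
    {R : Type*} [CommRing R] (a : R) :
    Ideal.comap (MvPowerSeries.C (σ := Fin 2) (R := R))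
      (Ideal.span {(MvPowerSeries.X 0 : MvPowerSeries (Fin 2) R),
        MvPowerSeries.X 0 * MvPowerSeries.X 1 - MvPowerSeries.C (σ := Fin 2) (R := R) a})
      = Ideal.span {a} := by
  ext r
  rw [Ideal.mem_comap, Ideal.mem_span_pair, Ideal.mem_span_singleton]
  constructor
  · rintro ⟨u, v, h⟩
    have h2 := congrArg (MvPowerSeries.constantCoeff (σ := Fin 2) (R := R)) h
    simp only [map_add, map_mul, map_sub, MvPowerSeries.constantCoeff_X,
      MvPowerSeries.constantCoeff_C, mul_zero, zero_mul, zero_sub, zero_add,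
      mul_neg] at h2
    exact ⟨-(MvPowerSeries.constantCoeff (σ := Fin 2) (R := R) v), by rw [← h2]; ring⟩
  · rintro ⟨c, rfl⟩
    refine ⟨MvPowerSeries.C (σ := Fin 2) (R := R) c * MvPowerSeries.X 1,
      -(MvPowerSeries.C (σ := Fin 2) (R := R) c), ?_⟩
    rw [map_mul]
    ring
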